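/- Let K be a number field with ring of integers R, let 𝔞 be a nonzero ideal of R, and let u be a unit of R with u ≠ 1. Then the set of additive characters χ : 𝔞 → 𝕋 of the additive group of 𝔞 with values in the circle group 𝕋 that satisfy χ(u·x) = χ(x) for all x ∈ 𝔞 is finite. -/

import Mathlib

open scoped NumberField

/-- Over a finite additive group, there are only finitely many circle-valued
additive characters. -/
lemma finite_addChar_circle (G : Type*) [AddCommGroup G] [Finite G] :
    Finite (AddChar G Circle) := by
  have hinj : Function.Injective
      (fun χ : AddChar G Circle => Circle.coeHom.compAddChar χ) :=
    MonoidHom.compAddChar_injective_right _ (fun a b h => Subtype.coe_injective h)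
  exact Finite.of_injective _ hinj

set_option synthInstance.maxHeartbeats 800000 in
set_option maxHeartbeats 1600000 in
/-- If `R` is the ring of integers of a number field `K`, `𝔞` is a nonzero ideal of `R`, and
`u` is a unit of `R` with `u ≠ 1`, then there are only finitely many additive characters
`χ : 𝔞 → 𝕋` of the additive group of `𝔞` with values in the circle group satisfying
`χ (u • x) = χ x` for all `x ∈ 𝔞`. -/
theorem finite_unit_fixed_addChars
    (K : Type*) [Field K] [NumberField K]
    (𝔞 : Ideal (𝓞 K)) (h𝔞 : 𝔞 ≠ 0) (u : (𝓞 K)ˣ) (hu : u ≠ 1) :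
    {χ : AddChar 𝔞 Circle |
      ∀ x : 𝔞, χ ⟨(u : 𝓞 K) * (x : 𝓞 K), Ideal.mul_mem_left 𝔞 (u : 𝓞 K) x.2⟩ = χ x}.Finite := by
  -- the ideal (u-1)·𝔞
  set 𝔟 : Ideal (𝓞 K) := Ideal.span {(u : 𝓞 K) - 1} * 𝔞 with h𝔟
  have hu1 : (u : 𝓞 K) - 1 ≠ 0 := by
    intro h
    apply hu
    ext
    have : (u : 𝓞 K) = 1 := by linear_combination h
    simpa using this
  have h𝔟ne : 𝔟 ≠ ⊥ := by
    rw [h𝔟, Ne, Ideal.mul_eq_bot]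
    push_neg
    exact ⟨by simpa [Ideal.span_singleton_eq_bot] using hu1, h𝔞⟩
  -- quotient 𝓞 K ⧸ 𝔟 is finite
  haveI : Fintype ((𝓞 K) ⧸ 𝔟) := @Fintype.ofFinite _ (Ideal.finiteQuotientOfFreeOfNeBot 𝔟 h𝔟ne)
  -- the additive map 𝔞 →+ 𝓞 K ⧸ 𝔟
  let f : 𝔞 →+ ((𝓞 K) ⧸ 𝔟) :=
    AddMonoidHom.mk' (fun x => Ideal.Quotient.mk 𝔟 (x : 𝓞 K))
      (fun a b => by push_cast; simp [map_add])
  have hmemker : ∀ x : 𝔞, x ∈ f.ker ↔ (x : 𝓞 K) ∈ 𝔟 := by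
    intro x
    simp [f, AddMonoidHom.mem_ker, Ideal.Quotient.eq_zero_iff_mem]
  -- the quotient 𝔞 ⧸ ker f is finite
  haveI : Finite (𝔞 ⧸ f.ker) :=
    Finite.of_injective _ (QuotientAddGroup.kerLift_injective f)
  haveI : Finite (AddChar (𝔞 ⧸ f.ker) Circle) := finite_addChar_circle _
  -- any χ in our set kills ker f
  have hkill : ∀ χ ∈ {χ : AddChar 𝔞 Circle |
      ∀ x : 𝔞, χ ⟨(u : 𝓞 K) * (x : 𝓞 K), Ideal.mul_mem_left 𝔞 (u : 𝓞 K) x.2⟩ = χ x},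
      ∀ x ∈ f.ker, χ x = 1 := by
    intro χ hχ x hx
    rw [hmemker] at hx
    rw [h𝔟, Ideal.mem_span_singleton_mul] at hx
    obtain ⟨z, hz, hzx⟩ := hx
    have hxeq : x = (⟨(u : 𝓞 K) * z, Ideal.mul_mem_left 𝔞 _ hz⟩ : 𝔞) - ⟨z, hz⟩ := by
      ext
      push_cast
      rw [← hzx]; push_cast; ring
    rw [hxeq, AddChar.map_sub_eq_div, hχ ⟨z, hz⟩, div_self']
  -- build the injection from our set into the characters of the finite quotient
  rw [← Set.finite_coe_iff]
  refine Finite.of_injective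
    (fun χ : {χ : AddChar 𝔞 Circle |
        ∀ x : 𝔞, χ ⟨(u : 𝓞 K) * (x : 𝓞 K), Ideal.mul_mem_left 𝔞 (u : 𝓞 K) x.2⟩ = χ x} =>
      (AddChar.toAddMonoidHomEquiv.symm
        (QuotientAddGroup.lift f.ker (AddChar.toAddMonoidHomEquiv (χ : AddChar 𝔞 Circle))
          (fun x hx => by
            have := hkill χ χ.2 x hx
            simp [this]) ) : AddChar (𝔞 ⧸ f.ker) Circle)) ?_
  intro χ₁ χ₂ h
  ext1
  ext x
  have := congrArg (fun ψ : AddChar (𝔞 ⧸ f.ker) Circle => ψ (QuotientAddGroup.mk x)) h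
  simp at this
  rw [this]
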